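/- Let (X_i) be i.i.d. real-valued random variables with 𝔼X₁ = 0 and X₁ not a.s. zero, S_n = X₁ + ⋯ + X_n, and T = min{n ≥ 1 : S_n > 0}. Then for every γ > 0, 𝔼[∑_{n=1}^{T−1} e^{γ S_n}] < ∞. -/

import Mathlib

open MeasureTheory ProbabilityTheory
open scoped ENNReal

noncomputable section
namespace Stmt13Aux

def pad {n : ℕ} (x : Fin n → ℝ) (i : ℕ) : ℝ := if h : i < n then x ⟨i, h⟩ else 0
def ps {n : ℕ} (x : Fin n → ℝ) (k : ℕ) : ℝ := ∑ i ∈ Finset.range k, pad x i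
def wt (γ : ℝ) {n : ℕ} (x : Fin n → ℝ) : ℝ≥0∞ := ENNReal.ofReal (Real.exp (γ * ps x n))

def Amin (n : ℕ) : Set (Fin n → ℝ) := {x | ∀ k, k ≤ n → ps x n ≤ ps x k}
def Bfd (m n : ℕ) : Set (Fin n → ℝ) := {x | (∀ k, 1 ≤ k → k < m → 0 < ps x k) ∧ ps x m ≤ 0}
def Aneg (n : ℕ) : Set (Fin n → ℝ) := {x | ∀ k, 1 ≤ k → k ≤ n → ps x k ≤ 0}

lemma ps_zero {n : ℕ} (x : Fin n → ℝ) : ps x 0 = 0 := by simp [ps]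

lemma measurable_pad {n : ℕ} (i : ℕ) : Measurable fun x : Fin n → ℝ => pad x i := by
  unfold pad
  split_ifs with h
  · exact measurable_pi_apply _
  · exact measurable_const

lemma measurable_ps {n : ℕ} (k : ℕ) : Measurable fun x : Fin n → ℝ => ps x k :=
  Finset.measurable_sum _ fun i _ => measurable_pad i

lemma measurable_wt (γ : ℝ) {n : ℕ} : Measurable fun x : Fin n → ℝ => wt γ x :=
  ENNReal.measurable_ofReal.comp <| Real.measurable_exp.comp <| (measurable_ps n).const_mul γ

lemma measurableSet_Amin (n : ℕ) : MeasurableSet (Amin n) := by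
  have : Amin n = ⋂ (k : ℕ) (_ : k ≤ n), {x : Fin n → ℝ | ps x n ≤ ps x k} := by
    ext x; simp [Amin, Set.mem_iInter]
  rw [this]
  exact MeasurableSet.iInter fun k => MeasurableSet.iInter fun _ =>
    measurableSet_le (measurable_ps n) (measurable_ps k)

lemma measurableSet_Bfd (m n : ℕ) : MeasurableSet (Bfd m n) := by
  have : Bfd m n = (⋂ (k : ℕ) (_ : 1 ≤ k) (_ : k < m), {x : Fin n → ℝ | 0 < ps x k}) ∩
      {x : Fin n → ℝ | ps x m ≤ 0} := by
    ext x; simp [Bfd, Set.mem_iInter]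
  rw [this]
  exact (MeasurableSet.iInter fun k => MeasurableSet.iInter fun _ => MeasurableSet.iInter fun _ =>
    measurableSet_lt measurable_const (measurable_ps k)).inter
    (measurableSet_le (measurable_ps m) measurable_const)

lemma measurableSet_Aneg (n : ℕ) : MeasurableSet (Aneg n) := by
  have : Aneg n = ⋂ (k : ℕ) (_ : 1 ≤ k) (_ : k ≤ n), {x : Fin n → ℝ | ps x k ≤ 0} := by
    ext x; simp [Aneg, Set.mem_iInter]
  rw [this]
  exact MeasurableSet.iInter fun k => MeasurableSet.iInter fun _ => MeasurableSet.iInter fun _ =>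
    measurableSet_le (measurable_ps k) measurable_const

lemma ps_rev {n : ℕ} (x : Fin n → ℝ) (k : ℕ) (hk : k ≤ n) :
    ps (fun i : Fin n => x (Fin.rev i)) k = ps x n - ps x (n - k) := by
  have h1 : ps (fun i : Fin n => x (Fin.rev i)) k = ∑ j ∈ Finset.Ico (n - k) n, pad x j := by
    unfold ps
    refine Finset.sum_nbij' (fun i => n - 1 - i) (fun j => n - 1 - j) ?_ ?_ ?_ ?_ ?_
    · intro i hi; simp only [Finset.mem_range] at hi; simp only [Finset.mem_Ico]; omega
    · intro j hj; simp only [Finset.mem_Ico] at hj; simp only [Finset.mem_range]; omega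
    · intro i hi; simp only [Finset.mem_range] at hi; omega
    · intro j hj; simp only [Finset.mem_Ico] at hj; omega
    · intro i hi
      simp only [Finset.mem_range] at hi
      have hin : i < n := by omega
      unfold pad
      rw [dif_pos hin, dif_pos (show n - 1 - i < n by omega)]
      have hrev : Fin.rev ⟨i, hin⟩ = (⟨n - 1 - i, by omega⟩ : Fin n) := by
        ext
        simp only [Fin.val_rev]
        omega
      dsimp only
      rw [hrev]
  rw [h1]
  have h2 : ps x (n - k) + ∑ j ∈ Finset.Ico (n - k) n, pad x j = ps x n := by
    unfold ps
    exact Finset.sum_range_add_sum_Ico _ (by omega)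
  linarith

lemma pad_append {m j : ℕ} (y : Fin m → ℝ) (z : Fin j → ℝ) (i : ℕ) :
    pad (Fin.append y z) i = if i < m then pad y i else pad z (i - m) := by
  unfold pad
  by_cases h1 : i < m
  · have h2 : i < m + j := by omega
    rw [dif_pos h2, if_pos h1, dif_pos h1]
    have : (⟨i, h2⟩ : Fin (m + j)) = Fin.castAdd j ⟨i, h1⟩ := by ext; rfl
    rw [this, Fin.append_left]
  · rw [if_neg h1]
    by_cases h2 : i < m + j
    · have h3 : i - m < j := by omega
      rw [dif_pos h2, dif_pos h3]
      have : (⟨i, h2⟩ : Fin (m + j)) = Fin.natAdd m ⟨i - m, h3⟩ := by ext; simp; omega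
      rw [this, Fin.append_right]
    · rw [dif_neg h2, dif_neg (by omega)]

lemma ps_append_le {m j : ℕ} (y : Fin m → ℝ) (z : Fin j → ℝ) {k : ℕ} (hk : k ≤ m) :
    ps (Fin.append y z) k = ps y k := by
  unfold ps
  refine Finset.sum_congr rfl fun i hi => ?_
  simp only [Finset.mem_range] at hi
  rw [pad_append, if_pos (by omega)]

lemma ps_append_add {m j : ℕ} (y : Fin m → ℝ) (z : Fin j → ℝ) (k : ℕ) :
    ps (Fin.append y z) (m + k) = ps y m + ps z k := by
  unfold ps
  rw [← Finset.sum_range_add_sum_Ico _ (show m ≤ m + k by omega)]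
  congr 1
  · refine Finset.sum_congr rfl fun i hi => ?_
    simp only [Finset.mem_range] at hi
    rw [pad_append, if_pos hi]
  · rw [Finset.sum_Ico_eq_sum_range]
    simp only [Nat.add_sub_cancel_left]
    refine Finset.sum_congr rfl fun i hi => ?_
    rw [pad_append, if_neg (by omega), Nat.add_sub_cancel_left]

def pim (ν : Measure ℝ) (n : ℕ) : Measure (Fin n → ℝ) := Measure.pi fun _ => ν

instance (ν : Measure ℝ) [IsProbabilityMeasure ν] (n : ℕ) : IsProbabilityMeasure (pim ν n) := by
  unfold pim; infer_instance

lemma measurePreserving_append (ν : Measure ℝ) [IsProbabilityMeasure ν] (m j : ℕ) :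
    MeasurePreserving (fun p : (Fin m → ℝ) × (Fin j → ℝ) => Fin.append p.1 p.2)
      ((pim ν m).prod (pim ν j)) (pim ν (m + j)) := by
  unfold pim
  have h1 := measurePreserving_sumPiEquivProdPi_symm
    (fun _ : Fin m ⊕ Fin j => (ν : Measure ℝ))
  have h2 := measurePreserving_piCongrLeft (fun _ : Fin (m + j) => (ν : Measure ℝ))
    finSumFinEquiv
  have h3 := h2.comp h1
  convert h3 using 1
  funext p
  funext i
  refine Fin.addCases (fun i0 => ?_) (fun i0 => ?_) i
  · rw [Fin.append_left]
    show _ = (MeasurableEquiv.piCongrLeft (fun _ : Fin (m + j) => ℝ) finSumFinEquiv)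
      ((MeasurableEquiv.sumPiEquivProdPi (fun _ : Fin m ⊕ Fin j => ℝ)).symm p)
      (finSumFinEquiv (Sum.inl i0))
    rw [MeasurableEquiv.coe_piCongrLeft, Equiv.piCongrLeft_apply_apply]
    rfl
  · rw [Fin.append_right]
    show _ = (MeasurableEquiv.piCongrLeft (fun _ : Fin (m + j) => ℝ) finSumFinEquiv)
      ((MeasurableEquiv.sumPiEquivProdPi (fun _ : Fin m ⊕ Fin j => ℝ)).symm p)
      (finSumFinEquiv (Sum.inr i0))
    rw [MeasurableEquiv.coe_piCongrLeft, Equiv.piCongrLeft_apply_apply]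
    rfl

lemma measurePreserving_rev (ν : Measure ℝ) [IsProbabilityMeasure ν] (n : ℕ) :
    MeasurePreserving (fun x : Fin n → ℝ => fun i => x (Fin.rev i)) (pim ν n) (pim ν n) := by
  unfold pim
  have h := measurePreserving_piCongrLeft (fun _ : Fin n => (ν : Measure ℝ))
    (Fin.revPerm : Equiv.Perm (Fin n))
  convert h using 1
  funext x
  funext i
  show x (Fin.rev i) = (MeasurableEquiv.piCongrLeft (fun _ : Fin n => ℝ) Fin.revPerm) x i
  rw [MeasurableEquiv.coe_piCongrLeft]
  have h2 := Equiv.piCongrLeft_apply_apply (fun _ : Fin n => ℝ) Fin.revPerm x (Fin.rev i)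
  simp only [Fin.revPerm_apply, Fin.rev_rev] at h2
  exact h2.symm

-- definitions of the three sequences
def cc (ν : Measure ℝ) (γ : ℝ) (n : ℕ) : ℝ≥0∞ :=
  ∫⁻ x, (Amin n).indicator (wt γ) x ∂(pim ν n)
def ff (ν : Measure ℝ) (γ : ℝ) (m : ℕ) : ℝ≥0∞ :=
  ∫⁻ x, (Bfd m m).indicator (wt γ) x ∂(pim ν m)
def aa (ν : Measure ℝ) (γ : ℝ) (n : ℕ) : ℝ≥0∞ :=
  ∫⁻ x, (Aneg n).indicator (wt γ) x ∂(pim ν n)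


lemma wt_le_one {γ : ℝ} (hγ : 0 ≤ γ) {n : ℕ} {x : Fin n → ℝ} (h : ps x n ≤ 0) : wt γ x ≤ 1 := by
  unfold wt
  rw [show (1 : ℝ≥0∞) = ENNReal.ofReal 1 by simp]
  exact ENNReal.ofReal_le_ofReal (by
    rw [show (1:ℝ) = Real.exp 0 by simp]
    exact Real.exp_le_exp.mpr (mul_nonpos_of_nonneg_of_nonpos hγ h))

lemma cc_le_one (ν : Measure ℝ) [IsProbabilityMeasure ν] {γ : ℝ} (hγ : 0 ≤ γ) (n : ℕ) :
    cc ν γ n ≤ 1 := by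
  have h1 : ∀ x : Fin n → ℝ, (Amin n).indicator (wt γ) x ≤ 1 := by
    intro x
    by_cases hx : x ∈ Amin n
    · rw [Set.indicator_of_mem hx]
      refine wt_le_one hγ ?_
      have := hx 0 (Nat.zero_le n)
      rwa [ps_zero] at this
    · rw [Set.indicator_of_notMem hx]; exact zero_le
  calc cc ν γ n ≤ ∫⁻ _, 1 ∂(pim ν n) := lintegral_mono h1
    _ = 1 := by simp

lemma cc_zero (ν : Measure ℝ) [IsProbabilityMeasure ν] (γ : ℝ) : cc ν γ 0 = 1 := by
  unfold cc
  have h1 : ∀ x : Fin 0 → ℝ, (Amin 0).indicator (wt γ) x = 1 := by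
    intro x
    have hx : x ∈ Amin 0 := by
      intro k hk
      exact le_refl _ |>.trans (by interval_cases k; exact le_refl _)
    rw [Set.indicator_of_mem hx]
    unfold wt
    rw [ps_zero]
    simp
  simp only [h1]
  simp

lemma aa_eq_cc (ν : Measure ℝ) [IsProbabilityMeasure ν] (γ : ℝ) (n : ℕ) :
    aa ν γ n = cc ν γ n := by
  unfold aa cc
  have hmeas : Measurable ((Aneg n).indicator (wt γ)) :=
    (measurable_wt γ).indicator (measurableSet_Aneg n)
  rw [← (measurePreserving_rev ν n).lintegral_comp hmeas]
  refine lintegral_congr fun x => ?_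
  have hwt : wt γ (fun i : Fin n => x (Fin.rev i)) = wt γ x := by
    unfold wt
    rw [ps_rev x n le_rfl, Nat.sub_self, ps_zero, sub_zero]
  have hmem : (fun i : Fin n => x (Fin.rev i)) ∈ Aneg n ↔ x ∈ Amin n := by
    constructor
    · intro h k hk
      rcases Nat.eq_or_lt_of_le hk with rfl | hk'
      · exact le_refl _
      · have := h (n - k) (by omega) (by omega)
        rw [ps_rev x (n - k) (by omega), show n - (n - k) = k by omega] at this
        linarith
    · intro h k hk1 hk2
      rw [ps_rev x k hk2]
      have := h (n - k) (by omega)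
      linarith
  by_cases hx : x ∈ Amin n
  · rw [Set.indicator_of_mem (hmem.mpr hx), Set.indicator_of_mem hx, hwt]
  · rw [Set.indicator_of_notMem (fun hc => hx (hmem.mp hc)), Set.indicator_of_notMem hx]

lemma step (ν : Measure ℝ) [IsProbabilityMeasure ν] (γ : ℝ) (m j : ℕ) :
    ∫⁻ x, (Amin (m + j) ∩ Bfd m (m + j)).indicator (wt γ) x ∂(pim ν (m + j))
      = ff ν γ m * cc ν γ j := by
  have hmeasF : Measurable ((Amin (m + j) ∩ Bfd m (m + j)).indicator (wt γ)) :=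
    (measurable_wt γ).indicator ((measurableSet_Amin _).inter (measurableSet_Bfd _ _))
  rw [← (measurePreserving_append ν m j).lintegral_comp hmeasF]
  have hpt : ∀ p : (Fin m → ℝ) × (Fin j → ℝ),
      (Amin (m + j) ∩ Bfd m (m + j)).indicator (wt γ) (Fin.append p.1 p.2)
      = (Bfd m m).indicator (wt γ) p.1 * (Amin j).indicator (wt γ) p.2 := by
    rintro ⟨y, z⟩
    have hwt : wt γ (Fin.append y z) = wt γ y * wt γ z := by
      unfold wt
      rw [ps_append_add y z j, mul_add, Real.exp_add,
        ENNReal.ofReal_mul (Real.exp_nonneg _)]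
    have hmem : Fin.append y z ∈ Amin (m + j) ∩ Bfd m (m + j) ↔
        (y ∈ Bfd m m ∧ z ∈ Amin j) := by
      constructor
      · rintro ⟨h1, h2, h3⟩
        refine ⟨⟨fun k hk1 hk2 => ?_, ?_⟩, fun k hk => ?_⟩
        · have := h2 k hk1 hk2
          rwa [ps_append_le y z (le_of_lt hk2)] at this
        · rwa [ps_append_le y z le_rfl] at h3
        · have h4 := h1 (m + k) (by omega)
          rw [ps_append_add, ps_append_add] at h4
          linarith
      · rintro ⟨⟨hy1, hy2⟩, hz⟩
        have hzj : ps z j ≤ 0 := by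
          have := hz 0 (Nat.zero_le j)
          rwa [ps_zero] at this
        refine ⟨fun k hk => ?_, fun k hk1 hk2 => ?_, ?_⟩
        · rw [ps_append_add y z j]
          by_cases hkm : k ≤ m
          · rw [ps_append_le y z hkm]
            rcases Nat.eq_zero_or_pos k with rfl | hk0
            · rw [ps_zero]; linarith
            · by_cases hkm' : k < m
              · have := hy1 k hk0 hkm'; linarith
              · have hkm'' : k = m := by omega
                subst hkm''; linarith
          · obtain ⟨k', rfl⟩ : ∃ k', k = m + k' := ⟨k - m, by omega⟩
            rw [ps_append_add]
            have := hz k' (by omega)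
            linarith
        · rw [ps_append_le y z (by omega)]
          exact hy1 k hk1 hk2
        · rw [ps_append_le y z le_rfl]
          exact hy2
    by_cases h : y ∈ Bfd m m ∧ z ∈ Amin j
    · rw [Set.indicator_of_mem (hmem.mpr h), Set.indicator_of_mem h.1,
        Set.indicator_of_mem h.2, hwt]
    · rw [Set.indicator_of_notMem (fun hc => h (hmem.mp hc))]
      rcases not_and_or.mp h with h' | h'
      · rw [Set.indicator_of_notMem h', zero_mul]
      · rw [Set.indicator_of_notMem h', mul_zero]
  simp only [hpt]
  exact lintegral_prod_mul
    ((measurable_wt γ).indicator (measurableSet_Bfd m m)).aemeasurable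
    ((measurable_wt γ).indicator (measurableSet_Amin j)).aemeasurable

lemma renewal (ν : Measure ℝ) [IsProbabilityMeasure ν] (γ : ℝ) (n : ℕ) (hn : 1 ≤ n) :
    cc ν γ n ≤ ∑ m ∈ Finset.Icc 1 n, ff ν γ m * cc ν γ (n - m) := by
  have hpt : ∀ x : Fin n → ℝ, (Amin n).indicator (wt γ) x ≤
      ∑ m ∈ Finset.Icc 1 n, (Amin n ∩ Bfd m n).indicator (wt γ) x := by
    intro x
    by_cases hx : x ∈ Amin n
    · have hns : n ∈ {k : ℕ | 1 ≤ k ∧ ps x k ≤ 0} := by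
        refine ⟨hn, ?_⟩
        have := hx 0 (Nat.zero_le n)
        rwa [ps_zero] at this
      set m := sInf {k : ℕ | 1 ≤ k ∧ ps x k ≤ 0} with hmdef
      have hms : m ∈ {k : ℕ | 1 ≤ k ∧ ps x k ≤ 0} := Nat.sInf_mem ⟨n, hns⟩
      have hmn : m ≤ n := Nat.sInf_le hns
      have hmem : x ∈ Amin n ∩ Bfd m n := by
        refine ⟨hx, fun k hk1 hk2 => ?_, hms.2⟩
        by_contra hc
        push_neg at hc
        have hkmem : k ∈ {k : ℕ | 1 ≤ k ∧ ps x k ≤ 0} := ⟨hk1, hc⟩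
        have := Nat.sInf_le hkmem
        omega
      calc (Amin n).indicator (wt γ) x = (Amin n ∩ Bfd m n).indicator (wt γ) x := by
            rw [Set.indicator_of_mem hx, Set.indicator_of_mem hmem]
        _ ≤ _ := Finset.single_le_sum (f := fun m => (Amin n ∩ Bfd m n).indicator (wt γ) x)
            (fun i _ => zero_le) (Finset.mem_Icc.mpr ⟨hms.1, hmn⟩)
    · rw [Set.indicator_of_notMem hx]
      exact zero_le
  calc cc ν γ n ≤ ∫⁻ x, ∑ m ∈ Finset.Icc 1 n,
        (Amin n ∩ Bfd m n).indicator (wt γ) x ∂(pim ν n) := lintegral_mono hpt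
    _ = ∑ m ∈ Finset.Icc 1 n,
        ∫⁻ x, (Amin n ∩ Bfd m n).indicator (wt γ) x ∂(pim ν n) :=
          lintegral_finset_sum _ (fun m _ => (measurable_wt γ).indicator
            ((measurableSet_Amin n).inter (measurableSet_Bfd m n)))
    _ ≤ ∑ m ∈ Finset.Icc 1 n, ff ν γ m * cc ν γ (n - m) := by
        refine Finset.sum_le_sum fun m hm => ?_
        rw [Finset.mem_Icc] at hm
        have hstep := step ν γ m (n - m)
        rw [show m + (n - m) = n by omega] at hstep
        exact le_of_eq hstep


lemma csum_bound (ν : Measure ℝ) [IsProbabilityMeasure ν] {γ : ℝ} (hγ : 0 ≤ γ)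
    {ρ : ℝ≥0∞} (hρ1 : ρ < 1)
    (hρ : ∀ N : ℕ, ∑ m ∈ Finset.Icc 1 N, ff ν γ m ≤ ρ) :
    ∑' n, cc ν γ n ≤ ENNReal.ofReal (1 / (1 - ρ.toReal)) := by
  set K := 1 / (1 - ρ.toReal) with hK
  have hr1 : ρ.toReal < 1 := by
    rw [← ENNReal.toReal_one]
    exact ENNReal.toReal_strict_mono ENNReal.one_ne_top hρ1
  -- partial sums bound
  have hCN : ∀ N : ℕ, ∑ n ∈ Finset.range (N + 1), cc ν γ n ≤ ENNReal.ofReal K := by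
    intro N
    set C := ∑ n ∈ Finset.range (N + 1), cc ν γ n with hC
    have hCfin : C ≠ ⊤ := by
      refine ne_top_of_le_ne_top (b := (N + 1 : ℕ)) (by simp) ?_
      calc C ≤ ∑ _n ∈ Finset.range (N + 1), 1 := Finset.sum_le_sum fun i _ => cc_le_one ν hγ i
        _ = (N + 1 : ℕ) := by simp
    have hrec : C ≤ 1 + ρ * C := by
      have hsplit : C = cc ν γ 0 + ∑ n ∈ Finset.Icc 1 N, cc ν γ n := by
        rw [hC]
        have : Finset.range (N + 1) = insert 0 (Finset.Icc 1 N) := by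
          ext i; simp [Finset.mem_range, Finset.mem_Icc]; omega
        rw [this, Finset.sum_insert (by simp)]
      have h1 : ∑ n ∈ Finset.Icc 1 N, cc ν γ n ≤ ρ * C := by
        calc ∑ n ∈ Finset.Icc 1 N, cc ν γ n
            ≤ ∑ n ∈ Finset.Icc 1 N, ∑ m ∈ Finset.Icc 1 n, ff ν γ m * cc ν γ (n - m) :=
              Finset.sum_le_sum fun n hn =>
                renewal ν γ n (Finset.mem_Icc.mp hn).1
          _ = ∑ n ∈ Finset.Ico 1 (N + 1), ∑ m ∈ Finset.Ico 1 (n + 1),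
                ff ν γ m * cc ν γ (n - m) := by
              refine Finset.sum_congr (by rw [Finset.Ico_add_one_right_eq_Icc]) fun n _ => ?_
              rw [Finset.Ico_add_one_right_eq_Icc]
          _ = ∑ m ∈ Finset.Ico 1 (N + 1), ∑ n ∈ Finset.Ico m (N + 1),
                ff ν γ m * cc ν γ (n - m) :=
              (Finset.sum_Ico_Ico_comm 1 (N + 1) fun m n => ff ν γ m * cc ν γ (n - m)).symm
          _ ≤ ∑ m ∈ Finset.Ico 1 (N + 1), ff ν γ m * C := by
              refine Finset.sum_le_sum fun m hm => ?_
              rw [← Finset.mul_sum]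
              refine mul_le_mul_right ?_ _
              rw [Finset.mem_Ico] at hm
              have hre : ∑ n ∈ Finset.Ico m (N + 1), cc ν γ (n - m)
                  = ∑ j ∈ Finset.range (N + 1 - m), cc ν γ j := by
                rw [Finset.sum_Ico_eq_sum_range]
                exact Finset.sum_congr rfl fun j _ => by rw [Nat.add_sub_cancel_left]
              rw [hre, hC]
              exact Finset.sum_le_sum_of_subset (by
                intro j hj
                simp only [Finset.mem_range] at hj ⊢
                omega)
          _ ≤ ρ * C := by
              rw [← Finset.sum_mul]
              refine mul_le_mul_left ?_ _
              rw [Finset.Ico_add_one_right_eq_Icc]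
              exact hρ N
      calc C = cc ν γ 0 + ∑ n ∈ Finset.Icc 1 N, cc ν γ n := hsplit
        _ ≤ 1 + ρ * C := add_le_add (le_of_eq (cc_zero ν γ)) h1
    -- pass to reals
    have hρfin : ρ ≠ ⊤ := ne_top_of_lt hρ1
    have hcr : C.toReal ≤ 1 + ρ.toReal * C.toReal := by
      have := ENNReal.toReal_mono (by
        refine ENNReal.add_ne_top.mpr ⟨by simp, ENNReal.mul_ne_top hρfin hCfin⟩) hrec
      rwa [ENNReal.toReal_add (by simp) (ENNReal.mul_ne_top hρfin hCfin),
        ENNReal.toReal_mul, ENNReal.toReal_one] at this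
    have hKpos : 0 < 1 - ρ.toReal := by linarith
    have hCK : C.toReal ≤ K := by
      rw [hK, le_div_iff₀ hKpos]
      nlinarith
    calc C = ENNReal.ofReal C.toReal := (ENNReal.ofReal_toReal hCfin).symm
      _ ≤ ENNReal.ofReal K := ENNReal.ofReal_le_ofReal hCK
  -- tsum bound
  rw [ENNReal.tsum_eq_iSup_sum]
  refine iSup_le fun s => ?_
  calc ∑ n ∈ s, cc ν γ n ≤ ∑ n ∈ Finset.range (s.sup id + 1), cc ν γ n :=
        Finset.sum_le_sum_of_subset (fun n hn => by
          simp only [Finset.mem_range]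
          exact Nat.lt_succ_of_le (Finset.le_sup (f := id) hn))
    _ ≤ ENNReal.ofReal K := hCN _


lemma joint_law {Ω : Type*} [MeasurableSpace Ω] (μ : Measure Ω) [IsProbabilityMeasure μ]
    (X : ℕ → Ω → ℝ) (hmeas : ∀ i, Measurable (X i))
    (hindep : iIndepFun X μ)
    (hident : ∀ i, IdentDistrib (X i) (X 0) μ μ) (n : ℕ) :
    μ.map (fun ω (i : Fin n) => X (i : ℕ) ω) = pim (μ.map (X 0)) n := by
  have hvec : Measurable (fun ω (i : Fin n) => X (i : ℕ) ω) :=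
    measurable_pi_lambda _ fun i => hmeas i
  haveI : IsProbabilityMeasure (μ.map (X 0)) := Measure.isProbabilityMeasure_map (hmeas 0).aemeasurable
  unfold pim
  symm
  apply Measure.pi_eq
  intro s hs
  classical
  set sets : ℕ → Set ℝ := fun t => if h : t < n then s ⟨t, h⟩ else Set.univ with hsets
  have hsets_apply : ∀ (j : ℕ) (h : j < n), sets j = s ⟨j, h⟩ := by
    intro j h
    rw [hsets]
    dsimp only
    rw [dif_pos h]
  have hsets_meas : ∀ j, MeasurableSet (sets j) := by
    intro j
    by_cases h : j < n
    · rw [hsets_apply j h]; exact hs _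
    · rw [hsets]; dsimp only; rw [dif_neg h]; exact MeasurableSet.univ
  have hSim : (Finset.univ.image (fun i : Fin n => (i : ℕ))) = Finset.range n := by
    ext j
    simp only [Finset.mem_image, Finset.mem_range, Finset.mem_univ, true_and]
    constructor
    · rintro ⟨i, rfl⟩; exact i.2
    · intro hj; exact ⟨⟨j, hj⟩, rfl⟩
  have hkey := hindep.measure_inter_preimage_eq_mul (Finset.range n)
    (sets := sets) (fun i _ => hsets_meas i)
  have hpre : (fun ω (i : Fin n) => X (i : ℕ) ω) ⁻¹' (Set.pi Set.univ s)
      = ⋂ i ∈ Finset.range n, X i ⁻¹' sets i := by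
    ext ω
    simp only [Set.mem_preimage, Set.mem_pi, Set.mem_univ, forall_true_left,
      Set.mem_iInter, Finset.mem_range]
    constructor
    · intro h i hi
      rw [hsets_apply i hi]
      exact h ⟨i, hi⟩
    · intro h i
      have h2 := h (i : ℕ) i.2
      rw [hsets_apply _ i.2] at h2
      simpa using h2
  rw [Measure.map_apply hvec (MeasurableSet.univ_pi hs), hpre, hkey]
  have hprod : ∀ i ∈ Finset.range n, μ (X i ⁻¹' sets i) = (μ.map (X 0)) (sets i) := by
    intro i hi
    rw [← (hident i).map_eq, Measure.map_apply (hmeas i) (hsets_meas i)]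
  rw [Finset.prod_congr rfl hprod, ← hSim,
    Finset.prod_image (fun i _ j _ h => Fin.val_injective h)]
  refine Finset.prod_congr rfl fun i _ => ?_
  rw [hsets_apply _ i.2]

end Stmt13Aux

open Stmt13Aux in
theorem stmt_13 {Ω : Type*} [MeasurableSpace Ω] (μ : Measure Ω) [IsProbabilityMeasure μ]
    (X : ℕ → Ω → ℝ) (hmeas : ∀ i, Measurable (X i))
    (hindep : iIndepFun X μ)
    (hident : ∀ i, IdentDistrib (X i) (X 0) μ μ)
    (hmean : ∫ ω, X 0 ω ∂μ = 0)
    (hint : Integrable (X 0) μ)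
    (hnz : ¬ (X 0 =ᵐ[μ] fun _ => 0))
    (S : ℕ → Ω → ℝ) (hS : ∀ n ω, S n ω = ∑ i ∈ Finset.range n, X i ω)
    (T : Ω → ℕ) (hT : ∀ ω, T ω = sInf {n : ℕ | 1 ≤ n ∧ 0 < S n ω})
    (γ : ℝ) (hγ : 0 < γ) :
    ∫⁻ ω, ∑ n ∈ Finset.Ico 1 (T ω), ENNReal.ofReal (Real.exp (γ * S n ω)) ∂μ < ⊤ := by
  classical
  set ν := μ.map (X 0) with hν
  haveI : IsProbabilityMeasure ν := Measure.isProbabilityMeasure_map (hmeas 0).aemeasurable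
  have hγ0 : (0:ℝ) ≤ γ := le_of_lt hγ
  have hps : ∀ (n k : ℕ), k ≤ n → ∀ ω, Stmt13Aux.ps (fun i : Fin n => X (i:ℕ) ω) k = S k ω := by
    intro n k hk ω
    rw [hS k ω]
    unfold Stmt13Aux.ps Stmt13Aux.pad
    refine Finset.sum_congr rfl fun i hi => ?_
    simp only [Finset.mem_range] at hi
    rw [dif_pos (lt_of_lt_of_le hi hk)]
  have hSmeas : ∀ k, Measurable (S k) := by
    intro k
    have h1 : S k = fun ω => ∑ i ∈ Finset.range k, X i ω := funext fun ω => hS k ω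
    rw [h1]
    exact Finset.measurable_sum _ fun i _ => hmeas i
  set E : ℕ → Set Ω := fun m => {ω | (∀ k, 1 ≤ k → k < m → 0 < S k ω) ∧ S m ω ≤ 0} with hE
  have hEmeas : ∀ m, MeasurableSet (E m) := by
    intro m
    have h1 : E m = (⋂ (k : ℕ) (_ : 1 ≤ k) (_ : k < m), {ω | 0 < S k ω}) ∩ {ω | S m ω ≤ 0} := by
      ext ω; simp [hE, Set.mem_iInter]
    rw [h1]
    exact (MeasurableSet.iInter fun k => MeasurableSet.iInter fun _ => MeasurableSet.iInter fun _ =>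
      measurableSet_lt measurable_const (hSmeas k)).inter
      (measurableSet_le (hSmeas m) measurable_const)
  set G : ℕ → Set Ω := fun n => {ω | ∀ k, 1 ≤ k → k ≤ n → S k ω ≤ 0} with hG
  have hGmeas : ∀ n, MeasurableSet (G n) := by
    intro n
    have h1 : G n = ⋂ (k : ℕ) (_ : 1 ≤ k) (_ : k ≤ n), {ω | S k ω ≤ 0} := by
      ext ω; simp [hG, Set.mem_iInter]
    rw [h1]
    exact MeasurableSet.iInter fun k => MeasurableSet.iInter fun _ => MeasurableSet.iInter fun _ =>
      measurableSet_le (hSmeas k) measurable_const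
  have htrans : ∀ (n : ℕ) (g : (Fin n → ℝ) → ℝ≥0∞), Measurable g →
      ∫⁻ x, g x ∂(Stmt13Aux.pim ν n) = ∫⁻ ω, g (fun i : Fin n => X (i:ℕ) ω) ∂μ := by
    intro n g hg
    rw [hν, ← joint_law μ X hmeas hindep hident n,
      lintegral_map hg (measurable_pi_lambda _ fun i => hmeas i)]
  have hff : ∀ m : ℕ, Stmt13Aux.ff ν γ m
      = ∫⁻ ω, (E m).indicator (fun ω => ENNReal.ofReal (Real.exp (γ * S m ω))) ω ∂μ := by
    intro m
    unfold Stmt13Aux.ff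
    rw [htrans m _ ((measurable_wt γ).indicator (measurableSet_Bfd m m))]
    refine lintegral_congr fun ω => ?_
    have hmem : (fun i : Fin m => X (i:ℕ) ω) ∈ Bfd m m ↔ ω ∈ E m := by
      constructor
      · rintro ⟨h1, h2⟩
        exact ⟨fun k hk1 hk2 => by rw [← hps m k (le_of_lt hk2) ω]; exact h1 k hk1 hk2,
          by rw [← hps m m le_rfl ω]; exact h2⟩
      · rintro ⟨h1, h2⟩
        exact ⟨fun k hk1 hk2 => by rw [hps m k (le_of_lt hk2) ω]; exact h1 k hk1 hk2,
          by rw [hps m m le_rfl ω]; exact h2⟩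
    have hwt : wt γ (fun i : Fin m => X (i:ℕ) ω)
        = ENNReal.ofReal (Real.exp (γ * S m ω)) := by
      unfold wt
      rw [hps m m le_rfl ω]
    by_cases h : ω ∈ E m
    · rw [Set.indicator_of_mem (hmem.mpr h), Set.indicator_of_mem h, hwt]
    · rw [Set.indicator_of_notMem (fun hc => h (hmem.mp hc)), Set.indicator_of_notMem h]
  have haa : ∀ n : ℕ, Stmt13Aux.aa ν γ n
      = ∫⁻ ω, (G n).indicator (fun ω => ENNReal.ofReal (Real.exp (γ * S n ω))) ω ∂μ := by
    intro n
    unfold Stmt13Aux.aa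
    rw [htrans n _ ((measurable_wt γ).indicator (measurableSet_Aneg n))]
    refine lintegral_congr fun ω => ?_
    have hmem : (fun i : Fin n => X (i:ℕ) ω) ∈ Aneg n ↔ ω ∈ G n := by
      constructor
      · intro h1
        exact fun k hk1 hk2 => by rw [← hps n k hk2 ω]; exact h1 k hk1 hk2
      · intro h1
        exact fun k hk1 hk2 => by rw [hps n k hk2 ω]; exact h1 k hk1 hk2
    have hwt : wt γ (fun i : Fin n => X (i:ℕ) ω)
        = ENNReal.ofReal (Real.exp (γ * S n ω)) := by
      unfold wt
      rw [hps n n le_rfl ω]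
    by_cases h : ω ∈ G n
    · rw [Set.indicator_of_mem (hmem.mpr h), Set.indicator_of_mem h, hwt]
    · rw [Set.indicator_of_notMem (fun hc => h (hmem.mp hc)), Set.indicator_of_notMem h]
  have hffle : ∀ m : ℕ, Stmt13Aux.ff ν γ m ≤ μ (E m) := by
    intro m
    rw [hff m]
    have hpt : ∀ ω, (E m).indicator (fun ω => ENNReal.ofReal (Real.exp (γ * S m ω))) ω
        ≤ (E m).indicator (fun _ => 1) ω := by
      intro ω
      by_cases h : ω ∈ E m
      · rw [Set.indicator_of_mem h, Set.indicator_of_mem h]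
        refine ENNReal.ofReal_le_one.mpr ?_
        calc Real.exp (γ * S m ω) ≤ Real.exp 0 :=
              Real.exp_le_exp.mpr (mul_nonpos_of_nonneg_of_nonpos hγ0 h.2)
          _ = 1 := Real.exp_zero
      · rw [Set.indicator_of_notMem h, Set.indicator_of_notMem h]
    calc ∫⁻ ω, (E m).indicator (fun ω => ENNReal.ofReal (Real.exp (γ * S m ω))) ω ∂μ
        ≤ ∫⁻ ω, (E m).indicator (fun _ => 1) ω ∂μ := lintegral_mono hpt
      _ = 1 * μ (E m) := lintegral_indicator_const (hEmeas m) 1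
      _ = μ (E m) := one_mul _
  -- negativity of X 0 with positive probability
  have hX0neg : μ {ω | X 0 ω < 0} ≠ 0 := by
    intro h0
    have hae : 0 ≤ᵐ[μ] X 0 := by
      rw [Filter.EventuallyLE, ae_iff]
      convert h0 using 2
      ext ω
      simp [not_le]
    have hzero : X 0 =ᵐ[μ] 0 := (integral_eq_zero_iff_of_nonneg_ae hae hint).mp hmean
    exact hnz hzero
  obtain ⟨k0, hk0⟩ : ∃ k : ℕ, μ {ω | X 0 ω ≤ -(1/((k:ℝ)+1))} ≠ 0 := by
    by_contra hc
    push_neg at hc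
    apply hX0neg
    refine measure_mono_null ?_ (measure_iUnion_null fun k : ℕ => hc k)
    intro ω hω
    simp only [Set.mem_setOf_eq] at hω
    obtain ⟨k, hk⟩ := exists_nat_one_div_lt (show (0:ℝ) < -(X 0 ω) by linarith)
    refine Set.mem_iUnion.mpr ⟨k, ?_⟩
    simp only [Set.mem_setOf_eq]
    linarith
  set ε : ℝ := 1/((k0:ℝ)+1) with hεdef
  have hεpos : 0 < ε := by positivity
  set D : Set Ω := {ω | X 0 ω ≤ -ε} with hD
  have hDmeas : MeasurableSet D := measurableSet_le (hmeas 0) measurable_const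
  have hS1 : ∀ ω, S 1 ω = X 0 ω := fun ω => by rw [hS 1 ω, Finset.sum_range_one]
  have hDsub : D ⊆ E 1 := by
    intro ω hω
    simp only [hD, Set.mem_setOf_eq] at hω
    exact ⟨fun k hk1 hk2 => absurd hk2 (by omega), by rw [hS1 ω]; linarith⟩
  have hexple : Real.exp (-(γ*ε)) ≤ 1 := by
    calc Real.exp (-(γ*ε)) ≤ Real.exp 0 := Real.exp_le_exp.mpr (by nlinarith)
      _ = 1 := Real.exp_zero
  have hf1 : Stmt13Aux.ff ν γ 1 + ENNReal.ofReal (1 - Real.exp (-(γ*ε))) * μ D ≤ μ (E 1) := by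
    have hpt : ∀ ω, (E 1).indicator (fun ω => ENNReal.ofReal (Real.exp (γ * S 1 ω))) ω
        ≤ (E 1 \ D).indicator (fun _ => 1) ω
          + D.indicator (fun _ => ENNReal.ofReal (Real.exp (-(γ*ε)))) ω := by
      intro ω
      by_cases hω : ω ∈ E 1
      · by_cases hωD : ω ∈ D
        · rw [Set.indicator_of_mem hω, Set.indicator_of_notMem (fun hc => hc.2 hωD),
            Set.indicator_of_mem hωD, zero_add]
          refine ENNReal.ofReal_le_ofReal (Real.exp_le_exp.mpr ?_)
          have h2 : X 0 ω ≤ -ε := hωD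
          rw [hS1 ω]
          nlinarith
        · rw [Set.indicator_of_mem hω, Set.indicator_of_mem (Set.mem_diff_of_mem hω hωD),
            Set.indicator_of_notMem hωD, add_zero]
          refine ENNReal.ofReal_le_one.mpr ?_
          calc Real.exp (γ * S 1 ω) ≤ Real.exp 0 :=
                Real.exp_le_exp.mpr (mul_nonpos_of_nonneg_of_nonpos hγ0 hω.2)
            _ = 1 := Real.exp_zero
      · rw [Set.indicator_of_notMem hω]
        exact zero_le
    have hstep1 : ∫⁻ ω, (E 1).indicator (fun ω => ENNReal.ofReal (Real.exp (γ * S 1 ω))) ω ∂μ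
        ≤ μ (E 1 \ D) + ENNReal.ofReal (Real.exp (-(γ*ε))) * μ D := by
      calc ∫⁻ ω, (E 1).indicator (fun ω => ENNReal.ofReal (Real.exp (γ * S 1 ω))) ω ∂μ
          ≤ ∫⁻ ω, ((E 1 \ D).indicator (fun _ => 1) ω
            + D.indicator (fun _ => ENNReal.ofReal (Real.exp (-(γ*ε)))) ω) ∂μ :=
            lintegral_mono hpt
        _ = ∫⁻ ω, (E 1 \ D).indicator (fun _ => 1) ω ∂μ
            + ∫⁻ ω, D.indicator (fun _ => ENNReal.ofReal (Real.exp (-(γ*ε)))) ω ∂μ :=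
            lintegral_add_left ((measurable_const (a := (1:ℝ≥0∞))).indicator
              ((hEmeas 1).diff hDmeas)) _
        _ = μ (E 1 \ D) + ENNReal.ofReal (Real.exp (-(γ*ε))) * μ D := by
            rw [lintegral_indicator_const ((hEmeas 1).diff hDmeas),
              lintegral_indicator_const hDmeas, one_mul]
    calc Stmt13Aux.ff ν γ 1 + ENNReal.ofReal (1 - Real.exp (-(γ*ε))) * μ D
        ≤ μ (E 1 \ D) + ENNReal.ofReal (Real.exp (-(γ*ε))) * μ D
          + ENNReal.ofReal (1 - Real.exp (-(γ*ε))) * μ D := by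
          refine add_le_add_left ?_ _
          rw [hff 1]
          exact hstep1
      _ = μ (E 1 \ D) + μ D := by
          rw [add_assoc, ← add_mul, ← ENNReal.ofReal_add (Real.exp_nonneg _) (by linarith)]
          norm_num
      _ = μ (E 1) := by
          rw [← measure_union (Set.disjoint_sdiff_left) hDmeas,
            Set.diff_union_of_subset hDsub]
  set ρ : ℝ≥0∞ := Stmt13Aux.ff ν γ 1 + μ ((E 1)ᶜ) with hρdef
  have hfffin : Stmt13Aux.ff ν γ 1 ≠ ⊤ :=
    ne_top_of_le_ne_top (measure_ne_top μ _) (hffle 1)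
  have hexplt : Real.exp (-(γ*ε)) < 1 := by
    calc Real.exp (-(γ*ε)) < Real.exp 0 := Real.exp_lt_exp.mpr (by nlinarith)
      _ = 1 := Real.exp_zero
  have hδ : ENNReal.ofReal (1 - Real.exp (-(γ*ε))) * μ D ≠ 0 := by
    refine mul_ne_zero ?_ hk0
    simp only [ne_eq, ENNReal.ofReal_eq_zero, not_le]
    linarith
  have hf1lt : Stmt13Aux.ff ν γ 1 < μ (E 1) :=
    lt_of_lt_of_le (ENNReal.lt_add_right hfffin hδ) hf1
  have hρlt : ρ < 1 := by
    calc ρ < μ (E 1) + μ ((E 1)ᶜ) := ENNReal.add_lt_add_right (measure_ne_top μ _) hf1lt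
      _ = 1 := by rw [measure_add_measure_compl (hEmeas 1), measure_univ]
  have hEsub : ∀ m, 2 ≤ m → E m ⊆ (E 1)ᶜ := by
    intro m hm ω hω
    intro hω1
    have h1 : 0 < S 1 ω := hω.1 1 le_rfl (by omega)
    have h2 : S 1 ω ≤ 0 := hω1.2
    linarith
  have hdisj : ∀ m m', 1 ≤ m → m < m' → Disjoint (E m) (E m') := by
    intro m m' hm hmm'
    rw [Set.disjoint_left]
    intro ω hω hω'
    have h1 : S m ω ≤ 0 := hω.2
    have h2 : 0 < S m ω := hω'.1 m hm hmm'
    linarith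
  have hρge : ∀ N, ∑ m ∈ Finset.Icc 1 N, Stmt13Aux.ff ν γ m ≤ ρ := by
    intro N
    rcases Nat.lt_or_ge N 1 with hN | hN
    · interval_cases N
      rw [Finset.Icc_eq_empty (by omega), Finset.sum_empty]
      exact zero_le
    · have hins : Finset.Icc 1 N = insert 1 (Finset.Icc 2 N) := by
        ext i; simp only [Finset.mem_Icc, Finset.mem_insert]; omega
      rw [hins, Finset.sum_insert (by simp)]
      rw [hρdef]
      refine add_le_add le_rfl ?_
      calc ∑ m ∈ Finset.Icc 2 N, Stmt13Aux.ff ν γ m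
          ≤ ∑ m ∈ Finset.Icc 2 N, μ (E m) := Finset.sum_le_sum fun m _ => hffle m
        _ = μ (⋃ m ∈ Finset.Icc 2 N, E m) := by
            refine (measure_biUnion_finset ?_ fun m _ => hEmeas m).symm
            intro m hm m' hm' hne
            simp only [Finset.coe_Icc, Set.mem_Icc] at hm hm'
            rcases Nat.lt_or_ge m m' with h | h
            · exact hdisj m m' (by omega) h
            · exact (hdisj m' m (by omega) (by omega)).symm
        _ ≤ μ ((E 1)ᶜ) := by
            refine measure_mono (Set.iUnion₂_subset fun m hm => ?_)
            simp only [Finset.mem_Icc] at hm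
            exact hEsub m hm.1
  have hsum := csum_bound ν hγ0 hρlt hρge
  set g : ℕ → Ω → ℝ≥0∞ :=
    fun n => (G n).indicator (fun ω => ENNReal.ofReal (Real.exp (γ * S n ω))) with hg
  have hgmeas : ∀ n, Measurable (g n) := fun n =>
    (ENNReal.measurable_ofReal.comp (Real.measurable_exp.comp
      ((hSmeas n).const_mul γ))).indicator (hGmeas n)
  have hptwise : ∀ ω, ∑ n ∈ Finset.Ico 1 (T ω), ENNReal.ofReal (Real.exp (γ * S n ω))
      ≤ ∑' n, g n ω := by
    intro ω
    have hmem : ∀ n ∈ Finset.Ico 1 (T ω),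
        ENNReal.ofReal (Real.exp (γ * S n ω)) = g n ω := by
      intro n hn
      rw [Finset.mem_Ico] at hn
      have hGn : ω ∈ G n := by
        intro k hk1 hk2
        by_contra hc
        push_neg at hc
        have hkmem : k ∈ {n : ℕ | 1 ≤ n ∧ 0 < S n ω} := ⟨hk1, hc⟩
        have h3 := Nat.sInf_le hkmem
        rw [← hT ω] at h3
        omega
      rw [hg]
      dsimp only
      rw [Set.indicator_of_mem hGn]
    calc ∑ n ∈ Finset.Ico 1 (T ω), ENNReal.ofReal (Real.exp (γ * S n ω))
        = ∑ n ∈ Finset.Ico 1 (T ω), g n ω := Finset.sum_congr rfl hmem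
      _ ≤ ∑' n, g n ω := ENNReal.sum_le_tsum _
  calc ∫⁻ ω, ∑ n ∈ Finset.Ico 1 (T ω), ENNReal.ofReal (Real.exp (γ * S n ω)) ∂μ
      ≤ ∫⁻ ω, ∑' n, g n ω ∂μ := lintegral_mono hptwise
    _ = ∑' n, ∫⁻ ω, g n ω ∂μ := lintegral_tsum fun n => (hgmeas n).aemeasurable
    _ = ∑' n, Stmt13Aux.cc ν γ n := by
        refine tsum_congr fun n => ?_
        rw [← aa_eq_cc ν γ n, haa n]
    _ ≤ ENNReal.ofReal (1 / (1 - ρ.toReal)) := hsum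
    _ < ⊤ := ENNReal.ofReal_lt_top
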